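/- Let G be a graph with no isolated vertex and H a nontrivial graph with γ_2(H) = γ(H) = 2. Then γ_I(G∘H) = γ_{(2,2,0)}(G). -/

import Mathlib

open scoped Classical
open Finset SimpleGraph

/-- A `w`-dominating function: `f : V → {0,…,l}` with `f(N(v)) ≥ w_{f(v)}` for all `v`. -/
def WDom {V : Type*} [Fintype V] (G : SimpleGraph V) {l : ℕ} (w : Fin (l+1) → ℕ)
    (f : V → Fin (l+1)) : Prop :=
  ∀ v, w (f v) ≤ ∑ u, if G.Adj v u then (f u : ℕ) else 0

/-- The `w`-domination number. -/
noncomputable def gammaW {V : Type*} [Fintype V] (G : SimpleGraph V) {l : ℕ}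
    (w : Fin (l+1) → ℕ) : ℕ :=
  sInf {n | ∃ f : V → Fin (l+1), WDom G w f ∧ ∑ v, (f v : ℕ) = n}

/-- The Italian domination number `γ_I = γ_{(2,0,0)}`. -/
noncomputable def gammaI {V : Type*} [Fintype V] (G : SimpleGraph V) : ℕ :=
  gammaW G ![2,0,0]

/-- The domination number. -/
noncomputable def gamma {V : Type*} [Fintype V] (G : SimpleGraph V) : ℕ :=
  sInf {n | ∃ S : Finset V, (∀ v, v ∈ S ∨ ∃ u ∈ S, G.Adj u v) ∧ S.card = n}

/-- The total domination number. -/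
noncomputable def gammaT {V : Type*} [Fintype V] (G : SimpleGraph V) : ℕ :=
  sInf {n | ∃ S : Finset V, (∀ v, ∃ u ∈ S, G.Adj u v) ∧ S.card = n}

/-- The 2-domination number. -/
noncomputable def gamma2 {V : Type*} [Fintype V] (G : SimpleGraph V) : ℕ :=
  sInf {n | ∃ S : Finset V, (∀ v ∉ S, 2 ≤ (S.filter (fun u => G.Adj u v)).card) ∧ S.card = n}

/-- The double domination number. -/
noncomputable def gammaX2 {V : Type*} [Fintype V] (G : SimpleGraph V) : ℕ :=
  sInf {n | ∃ S : Finset V, (∀ v, 2 ≤ (S.filter (fun u => u = v ∨ G.Adj u v)).card) ∧ S.card = n}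

/-- The double total domination number. -/
noncomputable def gammaX2T {V : Type*} [Fintype V] (G : SimpleGraph V) : ℕ :=
  sInf {n | ∃ S : Finset V, (∀ v, 2 ≤ (S.filter (fun u => G.Adj u v)).card) ∧ S.card = n}

/-- The lexicographic product `G ∘ H`. -/
def lexProd {V W : Type*} (G : SimpleGraph V) (H : SimpleGraph W) : SimpleGraph (V × W) where
  Adj x y := G.Adj x.1 y.1 ∨ (x.1 = y.1 ∧ H.Adj x.2 y.2)
  symm := by
    constructor
    rintro x y (h | ⟨h1, h2⟩)
    · exact Or.inl h.symm
    · exact Or.inr ⟨h1.symm, h2.symm⟩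
  loopless := by
    constructor
    rintro x (h | ⟨_, h⟩)
    · exact G.irrefl h
    · exact H.irrefl h

private lemma fin3_cases (a : Fin 3) : a = 0 ∨ a = 1 ∨ a = 2 := by revert a; decide

private lemma min2_sum {α : Type*} (s : Finset α) (t : α → ℕ) :
    min 2 (∑ u ∈ s, t u) ≤ ∑ u ∈ s, min 2 (t u) := by
  classical
  induction s using Finset.induction with
  | empty => simp
  | insert _ _ h ih => rw [Finset.sum_insert h, Finset.sum_insert h]; omega

set_option linter.unnecessarySeqFocus false in
theorem italian_lex_of_gamma2_eq_two {V W : Type*} [Fintype V] [Fintype W] [Nontrivial W]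
    (G : SimpleGraph V) (H : SimpleGraph W)
    (hG : ∀ v, ∃ u, G.Adj v u) (hH2 : gamma2 H = 2) (hH : gamma H = 2) :
    gammaI (lexProd G H) = gammaW G ![2,2,0] := by
  classical
  -- From γ₂(H) = 2: a 2-dominating pair {a, b} in H
  obtain ⟨a, b, hab, h2dom⟩ :
      ∃ a b : W, a ≠ b ∧ ∀ w, w ≠ a → w ≠ b → H.Adj a w ∧ H.Adj b w := by
    have hne : {n | ∃ S : Finset W, (∀ v ∉ S, 2 ≤ (S.filter (fun u => H.Adj u v)).card) ∧ S.card = n}.Nonempty :=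
      ⟨_, Finset.univ, fun v hv => absurd (Finset.mem_univ v) hv, rfl⟩
    have h2 := Nat.sInf_mem hne
    have e : sInf {n | ∃ S : Finset W, (∀ v ∉ S, 2 ≤ (S.filter (fun u => H.Adj u v)).card) ∧ S.card = n} = 2 := hH2
    rw [e] at h2
    obtain ⟨S, hS, hScard⟩ := h2
    rw [Finset.card_eq_two] at hScard
    obtain ⟨a, b, hab, rfl⟩ := hScard
    refine ⟨a, b, hab, fun w hwa hwb => ?_⟩
    have hw := hS w (by simp [hwa, hwb])
    constructor
    · by_contra h
      have hsub : ({a,b} : Finset W).filter (fun u => H.Adj u w) ⊆ {b} := by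
        intro x hx
        simp only [Finset.mem_filter, Finset.mem_insert, Finset.mem_singleton] at hx ⊢
        rcases hx.1 with rfl | rfl
        · exact absurd hx.2 h
        · rfl
      have := Finset.card_le_card hsub
      simp at this; omega
    · by_contra h
      have hsub : ({a,b} : Finset W).filter (fun u => H.Adj u w) ⊆ {a} := by
        intro x hx
        simp only [Finset.mem_filter, Finset.mem_insert, Finset.mem_singleton] at hx ⊢
        rcases hx.1 with rfl | rfl
        · rfl
        · exact absurd hx.2 h
      have := Finset.card_le_card hsub
      simp at this; omega
  -- From γ(H) = 2: no vertex of H dominates H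
  have hnodom : ∀ w0 : W, ∃ w', w' ≠ w0 ∧ ¬ H.Adj w0 w' := by
    intro w0
    by_contra hc
    push_neg at hc
    have h1 : (1:ℕ) ∈ {n | ∃ S : Finset W, (∀ v, v ∈ S ∨ ∃ u ∈ S, H.Adj u v) ∧ S.card = n} := by
      refine ⟨{w0}, fun v => ?_, Finset.card_singleton _⟩
      by_cases hv : v = w0
      · exact Or.inl (by simp [hv])
      · exact Or.inr ⟨w0, by simp, hc v hv⟩
    have h2 : gamma H ≤ 1 := Nat.sInf_le h1
    omega
  -- Claim 1: from a (2,2,0)-dominating function on G, an Italian function on G ∘ H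
  have claim1 : ∀ g : V → Fin 3, WDom G ![2,2,0] g →
      ∃ f : V × W → Fin 3, WDom (lexProd G H) ![2,0,0] f ∧
        ∑ x : V × W, (f x : ℕ) = ∑ v, (g v : ℕ) := by
    intro g hg
    set f : V × W → Fin 3 := fun x =>
      if x.2 = a then (if g x.1 = 0 then 0 else 1)
      else if x.2 = b then (if g x.1 = 2 then 1 else 0) else 0 with hfdef
    have hfiber : ∀ v, ∑ w : W, (f (v, w) : ℕ) = (g v : ℕ) := by
      intro v
      have hrw : ∀ w : W, (f (v, w) : ℕ) =
          (if w = a then (if g v = 0 then 0 else 1) else 0) +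
          (if w = b then (if g v = 2 then 1 else 0) else 0) := by
        intro w
        by_cases hwa : w = a
        · subst hwa
          simp [hfdef, hab, Ne.symm]
          rcases fin3_cases (g v) with h | h | h <;> simp [h, hab]
        · by_cases hwb : w = b <;> simp [hfdef, hwa, hwb] <;>
            rcases fin3_cases (g v) with h | h | h <;> simp [h, Ne.symm hab]
      rw [Finset.sum_congr rfl (fun w _ => hrw w), Finset.sum_add_distrib,
        Finset.sum_ite_eq' Finset.univ a, Finset.sum_ite_eq' Finset.univ b]
      rcases fin3_cases (g v) with h | h | h <;> simp [h]
    have hGbound : ∀ v (w : W), ![2,2,0] (g v) = 2 →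
        2 ≤ ∑ u : V × W, (if (lexProd G H).Adj (v, w) u then (f u : ℕ) else 0) := by
      intro v w hval
      have h1 : ∑ u, (if G.Adj v u then (g u : ℕ) else 0) ≤
          ∑ u : V × W, (if (lexProd G H).Adj (v, w) u then (f u : ℕ) else 0) := by
        rw [Fintype.sum_prod_type]
        refine Finset.sum_le_sum (fun u _ => ?_)
        by_cases hadj : G.Adj v u
        · have : ∀ w' : W, (if (lexProd G H).Adj (v, w) (u, w') then (f (u, w') : ℕ) else 0)
              = (f (u, w') : ℕ) := by
            intro w'
            rw [if_pos (show (lexProd G H).Adj (v, w) (u, w') from Or.inl hadj)]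
          rw [Finset.sum_congr rfl (fun w' _ => this w'), hfiber, if_pos hadj]
        · rw [if_neg hadj]
          exact Nat.zero_le _
      have h2 := hg v
      rw [hval] at h2
      omega
    refine ⟨f, ?_, ?_⟩
    · intro x
      obtain ⟨v, w⟩ := x
      rcases fin3_cases (f (v, w)) with hf | hf | hf
      rotate_left
      · rw [hf]; exact Nat.zero_le _
      · rw [hf]; exact Nat.zero_le _
      rw [hf]
      show 2 ≤ _
      rcases fin3_cases (g v) with hgv | hgv | hgv
      · exact hGbound v w (by rw [hgv]; rfl)
      · exact hGbound v w (by rw [hgv]; rfl)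
      · have hwa : w ≠ a := by
          intro h; rw [hfdef] at hf; simp [h, hgv] at hf
        have hwb : w ≠ b := by
          intro h; rw [hfdef] at hf; simp [h, hwa, hgv] at hf
        obtain ⟨hadja, hadjb⟩ := h2dom w hwa hwb
        have hfa : (f (v, a) : ℕ) = 1 := by simp [hfdef, hgv]
        have hfb : (f (v, b) : ℕ) = 1 := by simp [hfdef, hab, Ne.symm hab, hgv]
        have hpair : ({(v, a), (v, b)} : Finset (V × W)) ⊆ Finset.univ := Finset.subset_univ _
        have hsum := Finset.sum_le_sum_of_subset (f := fun u =>
          if (lexProd G H).Adj (v, w) u then (f u : ℕ) else 0) hpair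
        rw [Finset.sum_pair (by simp [hab])] at hsum
        have ha' : (lexProd G H).Adj (v, w) (v, a) := Or.inr ⟨rfl, hadja.symm⟩
        have hb' : (lexProd G H).Adj (v, w) (v, b) := Or.inr ⟨rfl, hadjb.symm⟩
        rw [if_pos ha', if_pos hb', hfa, hfb] at hsum
        exact hsum
    · rw [Fintype.sum_prod_type]
      exact Finset.sum_congr rfl (fun v _ => hfiber v)
  -- Claim 2: from an Italian function on G ∘ H, a (2,2,0)-dominating function on G
  have claim2 : ∀ f : V × W → Fin 3, WDom (lexProd G H) ![2,0,0] f →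
      ∃ g : V → Fin 3, WDom G ![2,2,0] g ∧ ∑ v, (g v : ℕ) ≤ ∑ x : V × W, (f x : ℕ) := by
    intro f hf
    set s : V → ℕ := fun v => ∑ w, (f (v, w) : ℕ) with hsdef
    set g : V → Fin 3 := fun v => if 2 ≤ s v then 2 else if s v = 1 then 1 else 0 with hgdef
    have hgval : ∀ v, (g v : ℕ) = min 2 (s v) := by
      intro v
      have hrw : g v = if 2 ≤ s v then 2 else if s v = 1 then 1 else 0 := rfl
      rw [hrw]
      split_ifs with h1 h2
      · rw [show ((2 : Fin 3) : ℕ) = 2 from rfl]; omega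
      · rw [show ((1 : Fin 3) : ℕ) = 1 from rfl]; omega
      · rw [show ((0 : Fin 3) : ℕ) = 0 from rfl]; omega
    refine ⟨g, ?_, ?_⟩
    · intro v
      rcases fin3_cases (g v) with hgv | hgv | hgv
      rotate_left
      rotate_left
      · rw [hgv]; exact Nat.zero_le _
      all_goals {
        have hsv : s v ≤ 1 := by
          have := hgval v
          rw [hgv] at this
          simp at this
          omega
        have hkey : ∃ w' : W, (f (v, w') : ℕ) = 0 ∧
            ∀ w'' : W, H.Adj w' w'' → (f (v, w'') : ℕ) = 0 := by
          by_cases hs0 : s v = 0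
          · have hall : ∀ w : W, (f (v, w) : ℕ) = 0 := by
              intro w
              have := Finset.sum_eq_zero_iff.mp
                (show ∑ w, (f (v, w) : ℕ) = 0 from hs0)
              exact this w (Finset.mem_univ w)
            obtain ⟨w, -⟩ := exists_pair_ne W
            exact ⟨w, hall w, fun w'' _ => hall w''⟩
          · have hs1 : s v = 1 := by omega
            have hex : ∃ w0 : W, (f (v, w0) : ℕ) ≠ 0 := by
              by_contra hc
              push_neg at hc
              have : s v = 0 := Finset.sum_eq_zero (fun w _ => hc w)
              omega
            obtain ⟨w0, hw0⟩ := hex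
            have herase : ∀ w : W, w ≠ w0 → (f (v, w) : ℕ) = 0 := by
              have hsplit := Finset.add_sum_erase Finset.univ (fun w => (f (v, w) : ℕ))
                (Finset.mem_univ w0)
              have hz : ∑ w ∈ Finset.univ.erase w0, (f (v, w) : ℕ) = 0 := by
                have : s v = (f (v, w0) : ℕ) + ∑ w ∈ Finset.univ.erase w0, (f (v, w) : ℕ) :=
                  hsplit.symm
                omega
              intro w hw
              exact Finset.sum_eq_zero_iff.mp hz w (Finset.mem_erase.mpr ⟨hw, Finset.mem_univ w⟩)
            obtain ⟨w', hw'ne, hw'adj⟩ := hnodom w0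
            refine ⟨w', herase w' hw'ne, fun w'' hadj => ?_⟩
            refine herase w'' (fun h => ?_)
            subst h
            exact hw'adj hadj.symm
        obtain ⟨w', hw'0, hw'⟩ := hkey
        have hIt := hf (v, w')
        have hf0 : f (v, w') = 0 := by
          apply Fin.ext
          simpa using hw'0
        rw [hf0] at hIt
        have hIt2 : (2 : ℕ) ≤ ∑ u : V × W, (if (lexProd G H).Adj (v, w') u then (f u : ℕ) else 0) :=
          hIt
        have hbound : ∑ u : V × W, (if (lexProd G H).Adj (v, w') u then (f u : ℕ) else 0) ≤
            ∑ u, (if G.Adj v u then s u else 0) := by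
          rw [Fintype.sum_prod_type]
          refine Finset.sum_le_sum (fun u _ => ?_)
          by_cases hadj : G.Adj v u
          · rw [if_pos hadj]
            refine le_trans (Finset.sum_le_sum (fun w'' _ => ?_)) le_rfl
            split_ifs <;> simp
          · rw [if_neg hadj]
            by_cases huv : u = v
            · subst huv
              refine le_of_eq (Finset.sum_eq_zero (fun w'' _ => ?_))
              split_ifs with hl
              · rcases hl with hl | ⟨-, hl⟩
                · exact absurd hl hadj
                · exact hw' w'' hl
              · rfl
            · refine le_of_eq (Finset.sum_eq_zero (fun w'' _ => ?_))
              have hl : ¬ (lexProd G H).Adj (v, w') (u, w'') := by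
                rintro (h | ⟨h, -⟩)
                · exact hadj h
                · exact huv h.symm
              rw [if_neg hl]
        have hsum2 : 2 ≤ ∑ u, (if G.Adj v u then s u else 0) := le_trans hIt2 hbound
        have hmin : min 2 (∑ u, (if G.Adj v u then s u else 0)) ≤
            ∑ u, min 2 (if G.Adj v u then s u else 0) := min2_sum _ _
        have hfinal : 2 ≤ ∑ u, (if G.Adj v u then (g u : ℕ) else 0) := by
          have heq : ∀ u, (if G.Adj v u then (g u : ℕ) else 0) =
              min 2 (if G.Adj v u then s u else 0) := by
            intro u
            by_cases h : G.Adj v u <;> simp [h, hgval]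
          rw [Finset.sum_congr rfl (fun u _ => heq u)]
          omega
        rw [hgv]
        exact hfinal
      }
    · rw [Fintype.sum_prod_type]
      refine Finset.sum_le_sum (fun v _ => ?_)
      rw [hgval]
      exact min_le_right _ _
  -- Put the two claims together
  have hBne : Set.Nonempty {n | ∃ g : V → Fin 3, WDom G ![2,2,0] g ∧ ∑ v, (g v : ℕ) = n} :=
    ⟨_, fun _ => 2, fun v => by
      rw [show ![2,2,0] ((fun _ : V => (2 : Fin 3)) v) = 0 from rfl]
      exact Nat.zero_le _, rfl⟩
  have hAne : Set.Nonempty {n | ∃ f : V × W → Fin 3,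
      WDom (lexProd G H) ![2,0,0] f ∧ ∑ x : V × W, (f x : ℕ) = n} :=
    ⟨_, fun _ => 2, fun x => by
      rw [show ![2,0,0] ((fun _ : V × W => (2 : Fin 3)) x) = 0 from rfl]
      exact Nat.zero_le _, rfl⟩
  apply le_antisymm
  · have hmem := Nat.sInf_mem hBne
    obtain ⟨g, hg, hgsum⟩ := hmem
    obtain ⟨f, hfdom, hfsum⟩ := claim1 g hg
    calc gammaI (lexProd G H) ≤ ∑ x : V × W, (f x : ℕ) := Nat.sInf_le ⟨f, hfdom, rfl⟩
      _ = gammaW G ![2,2,0] := by rw [hfsum]; exact hgsum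
  · have hmem := Nat.sInf_mem hAne
    obtain ⟨f, hfdom, hfsum⟩ := hmem
    obtain ⟨g, hgdom, hle⟩ := claim2 f hfdom
    calc gammaW G ![2,2,0] ≤ ∑ v, (g v : ℕ) := Nat.sInf_le ⟨g, hgdom, rfl⟩
      _ ≤ ∑ x : V × W, (f x : ℕ) := hle
      _ = gammaI (lexProd G H) := hfsum
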